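/- Let A = ⊕_{n≥0} A_n be a commutative ℕ-graded ℂ-algebra which is an integral domain with finite-dimensional graded pieces. Define κ(A) = −∞ if A_l = 0 for all l ≥ 1, and κ(A) = limsup_{l→∞} log(dim_ℂ A_l)/log l otherwise. If dim_ℂ A_{l0} ≥ 2 for some l0 ≥ 1, then κ(A) ≥ 1. -/

import Mathlib

open scoped Classical

open Polynomial in
lemma monomials_indep {A : Type*} [CommRing A] [IsDomain A] [Algebra ℂ A]
    {x y : A} (h : LinearIndependent ℂ ![x, y]) (k : ℕ) :
    LinearIndependent ℂ (fun i : Fin (k+1) => x ^ (i:ℕ) * y ^ (k - (i:ℕ))) := by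
  classical
  obtain ⟨hy, hxy⟩ := linearIndependent_fin2.mp h
  simp only [Matrix.cons_val_one, Matrix.head_cons, Matrix.cons_val_zero] at hy hxy
  rw [Fintype.linearIndependent_iff]
  intro g hg
  by_contra hne
  push_neg at hne
  obtain ⟨i0, hi0⟩ := hne
  set F := FractionRing A
  set f : A →+* F := algebraMap A F with hf
  have hinj : Function.Injective f := IsFractionRing.injective A F
  have hfy : f y ≠ 0 := fun hc => hy (hinj (by simpa using hc))
  set t : F := f x / f y with ht
  set P : ℂ[X] := ∑ i : Fin (k+1), C (g i) * X ^ (i:ℕ) with hP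
  have hPc : ∀ i : Fin (k+1), P.coeff (i:ℕ) = g i := by
    intro i
    rw [hP, Polynomial.finset_sum_coeff]
    rw [Finset.sum_eq_single i]
    · simp
    · intro j _ hji
      have : ((i:ℕ) : ℕ) ≠ (j:ℕ) := fun hc => hji (Fin.ext hc.symm)
      simp [Polynomial.coeff_X_pow, this]
    · simp
  have hP0 : P ≠ 0 := fun hc => hi0 (by rw [← hPc i0, hc, Polynomial.coeff_zero])
  have key : (Polynomial.aeval t) P * (f y) ^ k = 0 := by
    rw [hP, map_sum, Finset.sum_mul]
    have : ∀ i : Fin (k+1), (Polynomial.aeval t) (C (g i) * X ^ (i:ℕ)) * (f y) ^ k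
        = f (g i • (x ^ (i:ℕ) * y ^ (k - (i:ℕ)))) := by
      intro i
      have hik : (i:ℕ) + (k - (i:ℕ)) = k := Nat.add_sub_cancel' (Nat.lt_succ_iff.mp i.isLt)
      have hyk : f y ^ k = f y ^ (i:ℕ) * f y ^ (k - (i:ℕ)) := by rw [← pow_add, hik]
      rw [map_mul, Polynomial.aeval_C, map_pow, Polynomial.aeval_X, ht, div_pow, hyk,
        Algebra.smul_def, IsScalarTower.algebraMap_apply ℂ A F, map_mul, map_mul, map_pow,
        map_pow]
      rw [← hf, mul_assoc, div_mul_eq_mul_div, mul_comm (f y ^ (i:ℕ)), ← mul_assoc,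
        mul_div_cancel_right₀ _ (pow_ne_zero _ hfy)]
    rw [Finset.sum_congr rfl fun i _ => this i, ← map_sum, hg, map_zero]
  have haev : (Polynomial.aeval t) P = 0 := by
    rcases mul_eq_zero.mp key with h1 | h1
    · exact h1
    · exact absurd h1 (pow_ne_zero _ hfy)
  have hint : IsIntegral ℂ t := (IsAlgebraic.isIntegral ⟨P, hP0, haev⟩)
  have hdeg : (minpoly ℂ t).degree = 1 :=
    IsAlgClosed.degree_eq_one_of_irreducible ℂ (minpoly.irreducible hint)
  have hmon := minpoly.monic hint
  have hnd : (minpoly ℂ t).natDegree = 1 := Polynomial.natDegree_eq_of_degree_eq_some hdeg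
  have heq := hmon.eq_X_add_C hnd
  have haev2 := minpoly.aeval ℂ t
  rw [heq] at haev2
  simp only [map_add, Polynomial.aeval_X, Polynomial.aeval_C] at haev2
  set a : ℂ := -(minpoly ℂ t).coeff 0 with ha
  have htval : t = algebraMap ℂ F a := by
    rw [ha, map_neg]; linear_combination haev2
  have hfx : f x = algebraMap ℂ F a * f y := by
    rw [← htval, ht, div_mul_cancel₀ _ hfy]
  have hxa : x = a • y := by
    apply hinj
    rw [hfx, Algebra.smul_def, map_mul, ← IsScalarTower.algebraMap_apply ℂ A F]
  exact hxy a hxa.symm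

lemma finrank_piece_ge {A : Type*} [CommRing A] [IsDomain A] [Algebra ℂ A]
    (𝒜 : ℕ → Submodule ℂ A) [GradedAlgebra 𝒜]
    (hfin : ∀ n : ℕ, FiniteDimensional ℂ (𝒜 n))
    (l0 : ℕ) (h2 : 2 ≤ Module.finrank ℂ (𝒜 l0)) (k : ℕ) :
    k + 1 ≤ Module.finrank ℂ (𝒜 (k * l0)) := by
  classical
  haveI := hfin l0
  haveI := hfin (k * l0)
  obtain ⟨v, hv⟩ := exists_linearIndependent_of_le_finrank (R := ℂ) (M := 𝒜 l0) h2
  have hv' : LinearIndependent ℂ (fun i : Fin 2 => ((v i : A))) :=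
    hv.map' (𝒜 l0).subtype (Submodule.ker_subtype _)
  have hpair : LinearIndependent ℂ ![(v 0 : A), (v 1 : A)] := by
    have : ![(v 0 : A), (v 1 : A)] = fun i : Fin 2 => ((v i : A)) := by
      ext i; fin_cases i <;> rfl
    rw [this]; exact hv'
  have hmono := monomials_indep hpair k
  have hmem : ∀ i : Fin (k+1),
      (v 0 : A) ^ (i:ℕ) * (v 1 : A) ^ (k - (i:ℕ)) ∈ 𝒜 (k * l0) := by
    intro i
    have h1 : (v 0 : A) ^ (i:ℕ) ∈ 𝒜 ((i:ℕ) * l0) := by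
      simpa using SetLike.pow_mem_graded (i:ℕ) (v 0).2
    have h2' : (v 1 : A) ^ (k - (i:ℕ)) ∈ 𝒜 ((k - (i:ℕ)) * l0) := by
      simpa using SetLike.pow_mem_graded (k - (i:ℕ)) (v 1).2
    have := SetLike.mul_mem_graded h1 h2'
    have hik : (i:ℕ) * l0 + (k - (i:ℕ)) * l0 = k * l0 := by
      rw [← add_mul, Nat.add_sub_cancel' (Nat.lt_succ_iff.mp i.isLt)]
    rwa [hik] at this
  set G : Fin (k+1) → 𝒜 (k * l0) := fun i => ⟨_, hmem i⟩ with hG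
  have hGind : LinearIndependent ℂ G := by
    apply LinearIndependent.of_comp ((𝒜 (k * l0)).subtype)
    exact hmono
  simpa using hGind.fintype_card_le_finrank

/-- For a commutative ℕ-graded ℂ-algebra which is an integral domain with finite-dimensional
graded pieces, if `dim A_{l0} ≥ 2` for some `l0 ≥ 1`, then the Iitaka-type dimension
`κ(A)` is at least `1`. -/
theorem stmt3 (A : Type*) [CommRing A] [IsDomain A] [Algebra ℂ A]
    (𝒜 : ℕ → Submodule ℂ A) [GradedAlgebra 𝒜]
    (hfin : ∀ n : ℕ, FiniteDimensional ℂ (𝒜 n))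
    (l0 : ℕ) (hl0 : 1 ≤ l0) (h2 : 2 ≤ Module.finrank ℂ (𝒜 l0)) :
    (1 : EReal) ≤
      if ∀ l : ℕ, 1 ≤ l → 𝒜 l = ⊥ then (⊥ : EReal)
      else
        Filter.limsup
          (fun l : ℕ =>
            ((Real.log (Module.finrank ℂ (𝒜 l)) / Real.log l : ℝ) : EReal))
          Filter.atTop := by
  classical
  have hnot : ¬ (∀ l : ℕ, 1 ≤ l → 𝒜 l = ⊥) := by
    intro hall
    rw [hall l0 hl0] at h2
    simp [finrank_bot] at h2
  rw [if_neg hnot]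
  apply le_of_forall_lt
  intro c hc
  obtain ⟨b, hcb, hb1⟩ := EReal.lt_iff_exists_real_btwn.mp hc
  refine lt_of_lt_of_le hcb (Filter.le_limsup_of_frequently_le' ?_)
  have hb1' : b < 1 := by exact_mod_cast hb1
  rw [Filter.frequently_atTop]
  intro N
  -- the auxiliary sequence tends to 1
  have hlog : Filter.Tendsto (fun k : ℕ => Real.log k) Filter.atTop Filter.atTop :=
    Real.tendsto_log_atTop.comp tendsto_natCast_atTop_atTop
  have h0 : Filter.Tendsto (fun k : ℕ => Real.log l0 / Real.log k) Filter.atTop (nhds 0) :=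
    Filter.Tendsto.div_atTop tendsto_const_nhds hlog
  have h1 : Filter.Tendsto (fun k : ℕ => 1 + Real.log l0 / Real.log k) Filter.atTop (nhds 1) := by
    simpa using tendsto_const_nhds.add h0
  have htend : Filter.Tendsto (fun k : ℕ => 1 / (1 + Real.log l0 / Real.log k))
      Filter.atTop (nhds 1) := by
    have := Filter.Tendsto.div (tendsto_const_nhds (x := (1:ℝ))) h1 (by norm_num)
    simpa [Pi.div_def] using this
  have hev : ∀ᶠ k : ℕ in Filter.atTop,
      b < 1 / (1 + Real.log l0 / Real.log k) :=
    htend.eventually (eventually_gt_nhds hb1')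
  obtain ⟨k, hkN, hk2, hkb⟩ :
      ∃ k : ℕ, N ≤ k ∧ 2 ≤ k ∧ b < 1 / (1 + Real.log l0 / Real.log k) := by
    obtain ⟨k, hk⟩ := ((hev.and (Filter.eventually_ge_atTop N)).and
      (Filter.eventually_ge_atTop 2)).exists
    exact ⟨k, hk.1.2, hk.2, hk.1.1⟩
  refine ⟨k * l0, le_trans hkN (Nat.le_mul_of_pos_right k hl0), ?_⟩
  -- key numeric facts
  have hk0 : (0:ℝ) < (k:ℝ) := by positivity
  have hlogk : 0 < Real.log k := Real.log_pos (by exact_mod_cast hk2)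
  have hlogl0 : 0 ≤ Real.log l0 := Real.log_natCast_nonneg l0
  have hden : 0 < Real.log k + Real.log l0 := by linarith
  have hlogmul : Real.log ((k * l0 : ℕ) : ℝ) = Real.log k + Real.log l0 := by
    push_cast
    rw [Real.log_mul (by positivity) (by positivity : (l0:ℝ) ≠ 0)]
  have hb_lt : b < Real.log k / (Real.log k + Real.log l0) := by
    have : (1:ℝ) / (1 + Real.log l0 / Real.log k)
        = Real.log k / (Real.log k + Real.log l0) := by
      rw [div_eq_div_iff (by positivity) (ne_of_gt hden)]
      field_simp
    linarith [hkb, this ▸ hkb]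
  have hrank := finrank_piece_ge 𝒜 hfin l0 h2 k
  have hrank' : (k:ℝ) ≤ (Module.finrank ℂ (𝒜 (k * l0)) : ℝ) := by
    have : (k:ℝ) ≤ (k:ℝ) + 1 := by linarith
    exact le_trans this (by exact_mod_cast hrank)
  have hlogrank : Real.log k ≤ Real.log (Module.finrank ℂ (𝒜 (k * l0))) :=
    Real.log_le_log hk0 hrank'
  have hfinal : b ≤ Real.log (Module.finrank ℂ (𝒜 (k * l0)))
      / Real.log ((k * l0 : ℕ) : ℝ) := by
    rw [hlogmul]
    calc b ≤ Real.log k / (Real.log k + Real.log l0) := le_of_lt hb_lt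
    _ ≤ Real.log (Module.finrank ℂ (𝒜 (k * l0))) / (Real.log k + Real.log l0) :=
        (div_le_div_iff_of_pos_right hden).mpr hlogrank
  exact_mod_cast EReal.coe_le_coe_iff.mpr hfinal
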